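/- Let b, P, C, Λ, S₂ > 0, 1<q<2<r, and S_r>0, and suppose P<b. Define J(t) = ((b−P)/2)·t² − (C/(r·S_r^r))·t^r − (Λ/(q·S₂^q))·t^q for t≥0. If Λ < Λ₀ := ((r−2)·S₂^q/2)·((b−P)/(r−q))^{(r−q)/(r−2)}·(r·S_r^r·(2−q)/(2C))^{(2−q)/(r−2)}, then there exists ρ>0 with J(ρ)>0. -/

import Mathlib

theorem stmt7 (q r b P C Λ S₂ Sr : ℝ) (hq1 : 1 < q) (hq2 : q < 2) (hr : 2 < r)
    (hb : 0 < b) (hP : 0 < P) (hC : 0 < C) (hΛ : 0 < Λ) (hS₂ : 0 < S₂) (hSr : 0 < Sr)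
    (hPb : P < b)
    (hΛ0 : Λ < (r - 2) * S₂ ^ q / 2 * ((b - P) / (r - q)) ^ ((r - q) / (r - 2)) *
        (r * Sr ^ r * (2 - q) / (2 * C)) ^ ((2 - q) / (r - 2))) :
    ∃ ρ : ℝ, 0 < ρ ∧
      0 < (b - P) / 2 * ρ ^ (2:ℝ) - C / (r * Sr ^ r) * ρ ^ r - Λ / (q * S₂ ^ q) * ρ ^ q := by
  have hr2 : (0:ℝ) < r - 2 := by linarith
  have hrq : (0:ℝ) < r - q := by linarith
  have h2q : (0:ℝ) < 2 - q := by linarith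
  have hbP : (0:ℝ) < b - P := by linarith
  have hSrr : (0:ℝ) < Sr ^ r := Real.rpow_pos_of_pos hSr r
  have hS2q : (0:ℝ) < S₂ ^ q := Real.rpow_pos_of_pos hS₂ q
  have hrpos : (0:ℝ) < r := by linarith
  have hqpos : (0:ℝ) < q := by linarith
  set A := (b - P) / 2 with hA
  set B := C / (r * Sr ^ r) with hB
  have hApos : 0 < A := by positivity
  have hBpos : 0 < B := by positivity
  set X := (2 - q) * A / ((r - q) * B) with hX
  have hXpos : 0 < X := by positivity
  set ρ := X ^ ((r - 2)⁻¹) with hρ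
  have hρpos : 0 < ρ := Real.rpow_pos_of_pos hXpos _
  refine ⟨ρ, hρpos, ?_⟩
  have hρr2 : ρ ^ (r - 2) = X := by
    rw [hρ, ← Real.rpow_mul hXpos.le, inv_mul_cancel₀ hr2.ne', Real.rpow_one]
  have h2split : ρ ^ (2:ℝ) = ρ ^ q * ρ ^ (2 - q) := by
    rw [← Real.rpow_add hρpos]; ring_nf
  have hrsplit : ρ ^ r = ρ ^ q * (ρ ^ (2 - q) * ρ ^ (r - 2)) := by
    rw [← Real.rpow_add hρpos, ← Real.rpow_add hρpos]; ring_nf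
  have hρ2q : ρ ^ (2 - q) = X ^ ((2 - q) / (r - 2)) := by
    rw [hρ, ← Real.rpow_mul hXpos.le, div_eq_inv_mul]
  -- key inequality: D < A * ρ^(2-q) - B * ρ^(2-q) * X
  set e := (2 - q) / (r - 2) with he
  have hXsplit : X = ((b - P) / (r - q)) * (r * Sr ^ r * (2 - q) / (2 * C)) := by
    rw [hX, hA, hB]; field_simp
  have hXe : X ^ e = ((b - P) / (r - q)) ^ e * (r * Sr ^ r * (2 - q) / (2 * C)) ^ e := by
    rw [hXsplit, Real.mul_rpow (by positivity) (by positivity)]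
  have hexp : ((b - P) / (r - q)) ^ ((r - q) / (r - 2))
      = ((b - P) / (r - q)) * ((b - P) / (r - q)) ^ e := by
    have h1 : (r - q) / (r - 2) = 1 + e := by
      rw [he]; field_simp; ring
    rw [h1, Real.rpow_add (by positivity), Real.rpow_one]
  -- Λ₀ identity
  have hΛ0' : Λ < A * (r - 2) / (r - q) * X ^ e * S₂ ^ q := by
    calc Λ < (r - 2) * S₂ ^ q / 2 * ((b - P) / (r - q)) ^ ((r - q) / (r - 2)) *
        (r * Sr ^ r * (2 - q) / (2 * C)) ^ ((2 - q) / (r - 2)) := hΛ0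
      _ = A * (r - 2) / (r - q) * X ^ e * S₂ ^ q := by
        rw [hexp, hXe, hA, he]
        field_simp
  have hBX : B * X = (2 - q) * A / (r - q) := by
    rw [hX]; field_simp
  have hkey : Λ / (q * S₂ ^ q) < A * ρ ^ (2 - q) - B * (ρ ^ (2 - q) * ρ ^ (r - 2)) := by
    have h1 : A * ρ ^ (2 - q) - B * (ρ ^ (2 - q) * ρ ^ (r - 2))
        = A * (r - 2) / (r - q) * X ^ e := by
      rw [hρr2, hρ2q]
      have : A * X ^ e - B * (X ^ e * X) = X ^ e * (A - B * X) := by ring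
      rw [this, hBX]
      field_simp
      ring
    rw [h1]
    have h2 : Λ / (q * S₂ ^ q) < Λ / S₂ ^ q := by
      rw [div_lt_div_iff₀ (by positivity) hS2q]
      have : 1 < q := hq1
      nlinarith [mul_pos hΛ hS2q]
    have h3 : Λ / S₂ ^ q < A * (r - 2) / (r - q) * X ^ e := by
      rw [div_lt_iff₀ hS2q]; linarith
    linarith
  have hρq : 0 < ρ ^ q := Real.rpow_pos_of_pos hρpos q
  rw [h2split, hrsplit, show A * (ρ ^ q * ρ ^ (2 - q)) - B * (ρ ^ q * (ρ ^ (2 - q) * ρ ^ (r - 2)))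
      - Λ / (q * S₂ ^ q) * ρ ^ q
      = ρ ^ q * ((A * ρ ^ (2 - q) - B * (ρ ^ (2 - q) * ρ ^ (r - 2))) - Λ / (q * S₂ ^ q)) from by
        ring]
  exact mul_pos hρq (sub_pos.2 hkey)
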